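/- Let n ≥ 1 and let S = (s_{i,j}) be an n×n spin matrix. Then the Hamiltonian H_1^{nn}(S) = (1/2)·Σ_{i=0}^{n−1} ((n−2) + Σ_{j=0}^{n−1} s_{i,j})^2 + (1/2)·Σ_{j=0}^{n−1} ((n−2) + Σ_{i=0}^{n−1} s_{i,j})^2 (a rational number) satisfies H_1^{nn}(S) ≥ 0, and H_1^{nn}(S) = 0 if and only if every row and every column of S contains exactly one entry equal to +1 (all other entries being −1). -/
import Mathlib

lemma spin_sum_aux (n : ℕ) (f : ℕ → ℤ) (hf : ∀ j < n, f j = -1 ∨ f j = 1) :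
    (∑ j ∈ Finset.range n, f j = 2 - n) ↔ (∃! j, j < n ∧ f j = 1) := by
  classical
  set T := (Finset.range n).filter (fun j => f j = 1) with hT
  have hsum : ∑ j ∈ Finset.range n, (f j + 1) = 2 * T.card := by
    have : ∑ j ∈ Finset.range n, (f j + 1)
        = ∑ j ∈ Finset.range n, (if f j = 1 then (2:ℤ) else 0) := by
      apply Finset.sum_congr rfl
      intro j hj
      rcases hf j (Finset.mem_range.mp hj) with h | h <;> simp [h]
    rw [this, ← Finset.sum_filter, ← hT, Finset.sum_const]
    simp [nsmul_eq_mul, mul_comm]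
  have hsum' : ∑ j ∈ Finset.range n, f j = 2 * T.card - n := by
    have := hsum
    rw [Finset.sum_add_distrib, Finset.sum_const, Finset.card_range] at this
    simp [nsmul_eq_mul] at this
    omega
  rw [hsum']
  have hcard : (2 * (T.card:ℤ) - n = 2 - n) ↔ T.card = 1 := by omega
  rw [hcard, Finset.card_eq_one]
  constructor
  · rintro ⟨a, ha⟩
    have haT : a ∈ T := by rw [ha]; exact Finset.mem_singleton_self a
    rw [hT, Finset.mem_filter, Finset.mem_range] at haT
    refine ⟨a, haT, ?_⟩
    intro b hb
    have : b ∈ T := by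
      rw [hT, Finset.mem_filter, Finset.mem_range]; exact hb
    rw [ha, Finset.mem_singleton] at this
    exact this
  · rintro ⟨a, ha, hu⟩
    refine ⟨a, ?_⟩
    ext b
    rw [hT, Finset.mem_filter, Finset.mem_range, Finset.mem_singleton]
    constructor
    · intro hb; exact hu b hb
    · rintro rfl; exact ha

theorem permutation_spin_one_hot_hamiltonian (n : ℕ) (hn : 1 ≤ n) (S : ℕ → ℕ → ℤ)
    (hS : ∀ i < n, ∀ j < n, S i j = -1 ∨ S i j = 1) :
    0 ≤ (1 / 2 : ℚ) * (∑ i ∈ Finset.range n,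
          ((n : ℚ) - 2 + ∑ j ∈ Finset.range n, (S i j : ℚ)) ^ 2) +
        (1 / 2 : ℚ) * (∑ j ∈ Finset.range n,
          ((n : ℚ) - 2 + ∑ i ∈ Finset.range n, (S i j : ℚ)) ^ 2) ∧
    ((1 / 2 : ℚ) * (∑ i ∈ Finset.range n,
          ((n : ℚ) - 2 + ∑ j ∈ Finset.range n, (S i j : ℚ)) ^ 2) +
        (1 / 2 : ℚ) * (∑ j ∈ Finset.range n,
          ((n : ℚ) - 2 + ∑ i ∈ Finset.range n, (S i j : ℚ)) ^ 2) = 0 ↔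
      (∀ i < n, ∃! j, j < n ∧ S i j = 1) ∧ (∀ j < n, ∃! i, i < n ∧ S i j = 1)) := by
  have hA : (0:ℚ) ≤ ∑ i ∈ Finset.range n,
      ((n : ℚ) - 2 + ∑ j ∈ Finset.range n, (S i j : ℚ)) ^ 2 :=
    Finset.sum_nonneg fun i _ => sq_nonneg _
  have hB : (0:ℚ) ≤ ∑ j ∈ Finset.range n,
      ((n : ℚ) - 2 + ∑ i ∈ Finset.range n, (S i j : ℚ)) ^ 2 :=
    Finset.sum_nonneg fun j _ => sq_nonneg _
  constructor
  · positivity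
  rw [show ∀ a b : ℚ, (1/2)*a + (1/2)*b = (a+b)/2 by intro a b; ring]
  rw [div_eq_zero_iff]
  have hiff : (∑ i ∈ Finset.range n, ((n : ℚ) - 2 + ∑ j ∈ Finset.range n, (S i j : ℚ)) ^ 2)
      + (∑ j ∈ Finset.range n, ((n : ℚ) - 2 + ∑ i ∈ Finset.range n, (S i j : ℚ)) ^ 2) = 0
      ↔ (∑ i ∈ Finset.range n, ((n : ℚ) - 2 + ∑ j ∈ Finset.range n, (S i j : ℚ)) ^ 2) = 0
      ∧ (∑ j ∈ Finset.range n, ((n : ℚ) - 2 + ∑ i ∈ Finset.range n, (S i j : ℚ)) ^ 2) = 0 := by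
    constructor
    · intro h; constructor <;> linarith
    · rintro ⟨h1, h2⟩; rw [h1, h2, add_zero]
  have hterm : ∀ (g : ℕ → ℤ), (∀ k < n, g k = -1 ∨ g k = 1) →
      (((n : ℚ) - 2 + ∑ k ∈ Finset.range n, (g k : ℚ)) ^ 2 = 0 ↔ ∃! k, k < n ∧ g k = 1) := by
    intro g hg
    rw [sq_eq_zero_iff, ← spin_sum_aux n g hg]
    constructor
    · intro h
      have : (↑(∑ k ∈ Finset.range n, g k) : ℚ) = ((2 - n : ℤ) : ℚ) := by
        push_cast
        linarith
      exact_mod_cast this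
    · intro h
      have : (↑(∑ k ∈ Finset.range n, g k) : ℚ) = ((2 - n : ℤ) : ℚ) := by exact_mod_cast h
      push_cast at this
      linarith
  have hRow : (∑ i ∈ Finset.range n, ((n : ℚ) - 2 + ∑ j ∈ Finset.range n, (S i j : ℚ)) ^ 2) = 0
      ↔ ∀ i < n, ∃! j, j < n ∧ S i j = 1 := by
    rw [Finset.sum_eq_zero_iff_of_nonneg (fun i _ => sq_nonneg _)]
    constructor
    · intro h i hi
      exact (hterm (S i) (hS i hi)).mp (h i (Finset.mem_range.mpr hi))
    · intro h i hi
      exact (hterm (S i) (hS i (Finset.mem_range.mp hi))).mpr (h i (Finset.mem_range.mp hi))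
  have hCol : (∑ j ∈ Finset.range n, ((n : ℚ) - 2 + ∑ i ∈ Finset.range n, (S i j : ℚ)) ^ 2) = 0
      ↔ ∀ j < n, ∃! i, i < n ∧ S i j = 1 := by
    rw [Finset.sum_eq_zero_iff_of_nonneg (fun j _ => sq_nonneg _)]
    constructor
    · intro h j hj
      exact (hterm (fun i => S i j) (fun i hi => hS i hi j hj)).mp (h j (Finset.mem_range.mpr hj))
    · intro h j hj
      have hj' := Finset.mem_range.mp hj
      exact (hterm (fun i => S i j) (fun i hi => hS i hi j hj')).mpr (h j hj')
  simp only [hiff, hRow, hCol]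
  norm_num
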